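/- Let n ≥ 2, Ω ⊂ ℝⁿ a bounded open set, T > 0 and ω ∈ S^{n−1}. Then there exist c > 0 and λ₀ > 0, independent of w and λ, such that for all λ > λ₀ and all w ∈ C²([0,T];C_c^∞(Ω)) satisfying w(0,x) = ∂_t w(0,x) = w(T,x) = 0 for all x ∈ ℝⁿ: ∫_Q |□w(t,x) + 2λ(∂_t w(t,x) + ω·∇_x w(t,x))|² dx dt ≥ ∫_Q |□w(t,x)|² dx dt + c λ² ∫_Q |w(t,x)|² dx dt. -/

import Mathlib

open MeasureTheory Real Set

noncomputable section

variable {n : ℕ}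

/-- first time derivative ∂ₜv -/
def pt (v : ℝ × (Fin n → ℝ) → ℂ) (X : ℝ × (Fin n → ℝ)) : ℂ :=
  deriv (fun s => v (s, X.2)) X.1

/-- second time derivative ∂ₜ²v -/
def ptt (v : ℝ × (Fin n → ℝ) → ℂ) (X : ℝ × (Fin n → ℝ)) : ℂ :=
  deriv (fun s => deriv (fun r => v (r, X.2)) s) X.1

/-- spatial directional derivative w·∇ₓv -/
def dx (v : ℝ × (Fin n → ℝ) → ℂ) (X : ℝ × (Fin n → ℝ)) (w : Fin n → ℝ) : ℂ :=
  fderiv ℝ (fun z => v (X.1, z)) X.2 w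

/-- spatial Laplacian Δₓv -/
def lapx (v : ℝ × (Fin n → ℝ) → ℂ) (X : ℝ × (Fin n → ℝ)) : ℂ :=
  ∑ i, fderiv ℝ (fun z => dx v (X.1, z) (Pi.single i 1)) X.2 (Pi.single i 1)

/-- wave operator □v = ∂ₜ²v − Δₓv -/
def waveOp (v : ℝ × (Fin n → ℝ) → ℂ) (X : ℝ × (Fin n → ℝ)) : ℂ :=
  ptt v X - lapx v X

open Filter Topology ComplexConjugate

set_option linter.unusedSectionVars false

section helpers
variable {G : Type*} [NormedAddCommGroup G] [NormedSpace ℝ G]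
lemma hasDerivAt_tslice {t : ℝ} {x : Fin n → ℝ} {F : ℝ × (Fin n → ℝ) → G} (hF : DifferentiableAt ℝ F (t, x)) :
    HasDerivAt (fun s => F (s, x)) (fderiv ℝ F (t, x) (1, 0)) t := by
  have h1 : HasDerivAt (fun s : ℝ => (s, x)) ((1:ℝ), (0 : Fin n → ℝ)) t :=
    (hasDerivAt_id t).prodMk (hasDerivAt_const t x)
  exact hF.hasFDerivAt.comp_hasDerivAt t h1
lemma hasFDerivAt_xslice {t : ℝ} {x : Fin n → ℝ} {F : ℝ × (Fin n → ℝ) → G} (hF : DifferentiableAt ℝ F (t, x)) :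
    HasFDerivAt (fun y => F (t, y))
      ((fderiv ℝ F (t, x)).comp (ContinuousLinearMap.inr ℝ ℝ (Fin n → ℝ))) x := by
  have h1 : HasFDerivAt (fun y : Fin n → ℝ => (t, y))
      (ContinuousLinearMap.inr ℝ ℝ (Fin n → ℝ)) x :=
    (hasFDerivAt_const t x).prodMk (hasFDerivAt_id x)
  exact hF.hasFDerivAt.comp x h1
lemma fderiv_xslice {t : ℝ} {x : Fin n → ℝ} {F : ℝ × (Fin n → ℝ) → G} (hF : DifferentiableAt ℝ F (t, x))
    (v : Fin n → ℝ) :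
    fderiv ℝ (fun y => F (t, y)) x v = fderiv ℝ F (t, x) (0, v) := by
  rw [(hasFDerivAt_xslice hF).fderiv]; rfl
lemma deriv_tslice {t : ℝ} {x : Fin n → ℝ} {F : ℝ × (Fin n → ℝ) → G} (hF : DifferentiableAt ℝ F (t, x)) :
    deriv (fun s => F (s, x)) t = fderiv ℝ F (t, x) (1, 0) :=
  (hasDerivAt_tslice hF).deriv
end helpers

section reg
variable {w : ℝ × (Fin n → ℝ) → ℂ}

/-- directional derivative -/
def Aop (w : ℝ × (Fin n → ℝ) → ℂ) (u : ℝ × (Fin n → ℝ)) (X : ℝ × (Fin n → ℝ)) : ℂ :=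
  fderiv ℝ w X u

lemma Aop_contDiff (hw : ContDiff ℝ 2 w) (u : ℝ × (Fin n → ℝ)) : ContDiff ℝ 1 (Aop w u) := by
  have h1 : ContDiff ℝ 1 (fderiv ℝ w) := hw.fderiv_right (by norm_num)
  exact (ContinuousLinearMap.apply ℝ ℂ u).contDiff.comp h1

lemma Aop_differentiable (hw : ContDiff ℝ 2 w) (u : ℝ × (Fin n → ℝ)) : Differentiable ℝ (Aop w u) :=
  (Aop_contDiff hw u).differentiable one_ne_zero

lemma Aop_add (u v : ℝ × (Fin n → ℝ)) (X) : Aop w (u + v) X = Aop w u X + Aop w v X := by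
  simp [Aop]

lemma fderiv_Aop (hw : ContDiff ℝ 2 w) (u v X) :
    fderiv ℝ (Aop w u) X v = fderiv ℝ (fderiv ℝ w) X v u := by
  have h1 : ContDiff ℝ 1 (fderiv ℝ w) := hw.fderiv_right (by norm_num)
  have : HasFDerivAt (Aop w u)
      ((ContinuousLinearMap.apply ℝ ℂ u).comp (fderiv ℝ (fderiv ℝ w) X)) X :=
    (ContinuousLinearMap.apply ℝ ℂ u).hasFDerivAt.comp X
      ((h1.differentiable one_ne_zero X).hasFDerivAt)
  rw [this.fderiv]; rfl

/-- Clairaut -/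
lemma Aop_symm (hw : ContDiff ℝ 2 w) (u v X) :
    fderiv ℝ (Aop w u) X v = fderiv ℝ (Aop w v) X u := by
  have h1 : ContDiff ℝ 1 (fderiv ℝ w) := hw.fderiv_right (by norm_num)
  rw [fderiv_Aop hw, fderiv_Aop hw]
  exact second_derivative_symmetric
    (fun y => ((hw.differentiable (by norm_num)) y).hasFDerivAt)
    ((h1.differentiable one_ne_zero X).hasFDerivAt) v u

lemma fderiv_Aop_continuous (hw : ContDiff ℝ 2 w) (u v) :
    Continuous (fun X => fderiv ℝ (Aop w u) X v) := by
  have := ((Aop_contDiff hw u).continuous_fderiv one_ne_zero)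
  exact this.clm_apply continuous_const

/-- identifications -/
lemma pt_eq (hw : ContDiff ℝ 2 w) (X) : pt w X = Aop w (1, 0) X := by
  cases X with
  | mk t x => exact deriv_tslice ((hw.differentiable (by norm_num)) (t, x))

lemma dx_eq (hw : ContDiff ℝ 2 w) (X) (v : Fin n → ℝ) : dx w X v = Aop w (0, v) X := by
  cases X with
  | mk t x => exact fderiv_xslice ((hw.differentiable (by norm_num)) (t, x)) v

lemma ptt_eq (hw : ContDiff ℝ 2 w) (X) : ptt w X = fderiv ℝ (Aop w (1, 0)) X (1, 0) := by
  cases X with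
  | mk t x =>
    have h1 : (fun s => deriv (fun r => w (r, x)) s) = fun s => Aop w (1, 0) (s, x) := by
      funext s
      exact deriv_tslice ((hw.differentiable (by norm_num)) (s, x))
    show deriv (fun s => deriv (fun r => w (r, x)) s) t = _
    rw [h1]
    exact deriv_tslice ((Aop_differentiable hw (1, 0)) (t, x))

lemma lapx_eq (hw : ContDiff ℝ 2 w) (X) : lapx w X = ∑ i, fderiv ℝ (Aop w (0, Pi.single i 1)) X (0, Pi.single i 1) := by
  cases X with
  | mk t x =>
    show ∑ i, fderiv ℝ (fun z => dx w (t, z) (Pi.single i 1)) x (Pi.single i 1) = _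
    congr 1; funext i
    have h1 : (fun z => dx w (t, z) (Pi.single i 1)) = fun z => Aop w (0, Pi.single i 1) (t, z) := by
      funext z; exact dx_eq hw (t, z) _
    rw [h1]
    exact fderiv_xslice ((Aop_differentiable hw _) (t, x)) _

end reg


/-- the real bilinear form B a b = Re (a * conj b) on ℂ -/
def Bre : ℂ →L[ℝ] ℂ →L[ℝ] ℝ :=
  LinearMap.mkContinuous₂
    (LinearMap.mk₂ ℝ (fun a b => (a * conj b).re)
      (by intro a a' b; simp [add_mul])
      (by intro c a b; simp [Complex.smul_re, smul_mul_assoc]; ring)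
      (by intro a b b'; simp [map_add, mul_add])
      (by intro c a b; simp [Complex.real_smul, map_mul, Complex.smul_re, Complex.conj_ofReal, mul_comm, mul_left_comm, Complex.mul_re]; ring))
    1
    (by
      intro a b
      simp only [LinearMap.mk₂_apply]
      calc |(a * conj b).re| ≤ ‖a * conj b‖ := Complex.abs_re_le_norm _
        _ ≤ 1 * ‖a‖ * ‖b‖ := by rw [norm_mul]; simp)

@[simp] lemma Bre_apply (a b : ℂ) : Bre a b = (a * conj b).re := rfl

lemma Bre_symm (a b : ℂ) : Bre a b = Bre b a := by
  simp [Bre_apply, Complex.mul_re, Complex.conj_re, Complex.conj_im]; ring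

section supp
variable {G : Type*} [NormedAddCommGroup G] [NormedSpace ℝ G]

lemma eqOn_fderiv_zero {U : Set (ℝ × (Fin n → ℝ))} (hU : IsOpen U)
    {F : ℝ × (Fin n → ℝ) → G} (h : EqOn F 0 U) (u : ℝ × (Fin n → ℝ)) :
    EqOn (fun X => fderiv ℝ F X u) 0 U := by
  intro X hX
  have h1 : F =ᶠ[nhds X] 0 := Filter.eventuallyEq_of_mem (hU.mem_nhds hX) h
  show fderiv ℝ F X u = 0
  have h2 : fderiv ℝ F X = fderiv ℝ (fun _ => (0:G)) X := h1.fderiv_eq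
  rw [h2, fderiv_fun_const]
  rfl

lemma integrableOn_strip {K : Set (Fin n → ℝ)} (hK : IsCompact K) {T : ℝ}
    {φ : ℝ × (Fin n → ℝ) → G} (hφ : Continuous φ)
    (hvan : ∀ X ∈ Ioo (0:ℝ) T ×ˢ Kᶜ, φ X = 0) :
    IntegrableOn φ (Ioo (0:ℝ) T ×ˢ (univ : Set (Fin n → ℝ))) := by
  have h1 : IntegrableOn φ (Icc (0:ℝ) T ×ˢ K) :=
    hφ.continuousOn.integrableOn_compact (isCompact_Icc.prod hK)
  have h2 : IntegrableOn φ (Ioo (0:ℝ) T ×ˢ K) :=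
    h1.mono_set (prod_mono Ioo_subset_Icc_self subset_rfl)
  have h3 : IntegrableOn φ (Ioo (0:ℝ) T ×ˢ Kᶜ) := by
    apply IntegrableOn.congr_fun (integrableOn_zero) ?_
      (measurableSet_Ioo.prod hK.isClosed.measurableSet.compl)
    intro X hX; exact (hvan X hX).symm
  have h4 : IntegrableOn φ (Ioo (0:ℝ) T ×ˢ K ∪ Ioo (0:ℝ) T ×ˢ Kᶜ) := h2.union h3
  apply h4.mono_set
  rw [← prod_union]
  simp

lemma fub1 {T : ℝ} {φ : ℝ × (Fin n → ℝ) → G}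
    (hφ : IntegrableOn φ (Ioo (0:ℝ) T ×ˢ (univ : Set (Fin n → ℝ)))) :
    ∫ X in Ioo (0:ℝ) T ×ˢ (univ : Set (Fin n → ℝ)), φ X
      = ∫ t in Ioo (0:ℝ) T, ∫ x, φ (t, x) := by
  rw [Measure.volume_eq_prod] at hφ ⊢
  rw [setIntegral_prod _ hφ]
  simp [Measure.restrict_univ]

lemma fub2 {T : ℝ} {φ : ℝ × (Fin n → ℝ) → G}
    (hφ : IntegrableOn φ (Ioo (0:ℝ) T ×ˢ (univ : Set (Fin n → ℝ)))) :
    ∫ X in Ioo (0:ℝ) T ×ˢ (univ : Set (Fin n → ℝ)), φ X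
      = ∫ x, ∫ t in Ioo (0:ℝ) T, φ (t, x) := by
  rw [Measure.volume_eq_prod] at hφ ⊢
  rw [IntegrableOn, ← Measure.prod_restrict] at hφ
  rw [← Measure.prod_restrict, integral_prod_symm _ hφ]
  simp [Measure.restrict_univ]

end supp

set_option linter.unusedSectionVars false

section ibp
variable {T : ℝ} {K : Set (Fin n → ℝ)}

lemma cont_BD {F G : ℝ × (Fin n → ℝ) → ℂ} (hF : ContDiff ℝ 1 F) (hG : Continuous G)
    (u : ℝ × (Fin n → ℝ)) :
    Continuous (fun X => Bre (fderiv ℝ F X u) (G X)) := by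
  have h1 : Continuous (fun X => fderiv ℝ F X u) :=
    (hF.continuous_fderiv one_ne_zero).clm_apply continuous_const
  exact (Bre.continuous₂).comp (h1.prodMk hG)

lemma ftc_time (hT : 0 < T) (hK : IsCompact K) {F : ℝ × (Fin n → ℝ) → ℂ}
    (hF : ContDiff ℝ 1 F) (hvan : EqOn F 0 (Ioo (0:ℝ) T ×ˢ Kᶜ)) :
    ∫ X in Ioo (0:ℝ) T ×ˢ (univ : Set (Fin n → ℝ)), Bre (fderiv ℝ F X (1, 0)) (F X)
      = ∫ x, (‖F (T, x)‖^2 - ‖F (0, x)‖^2)/2 := by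
  have hvan' := eqOn_fderiv_zero ((isOpen_Ioo).prod hK.isClosed.isOpen_compl) hvan (1,0)
  have hint : IntegrableOn (fun X => Bre (fderiv ℝ F X (1,0)) (F X))
      (Ioo (0:ℝ) T ×ˢ (univ : Set (Fin n → ℝ))) := by
    apply integrableOn_strip hK (cont_BD hF hF.continuous _)
    intro X hX
    simp [hvan' hX, show fderiv ℝ F X (1,0) = 0 from hvan' hX]
  rw [fub2 hint]
  congr 1; funext x
  have hFTC : ∫ t in Ioo (0:ℝ) T, Bre (fderiv ℝ F (t, x) (1,0)) (F (t, x))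
      = (‖F (T, x)‖^2)/2 - (‖F (0, x)‖^2)/2 := by
    rw [← integral_Ioc_eq_integral_Ioo, ← intervalIntegral.integral_of_le hT.le]
    have key : ∀ t ∈ uIcc (0:ℝ) T, HasDerivAt (fun s => ‖F (s, x)‖^2/2)
        (Bre (fderiv ℝ F (t, x) (1,0)) (F (t, x))) t := by
      intro t _
      have h := hasDerivAt_tslice ((hF.differentiable one_ne_zero) (t, x))
      have hre : HasDerivAt (fun s => (F (s, x)).re) ((fderiv ℝ F (t, x) (1,0)).re) t :=
        Complex.reCLM.hasFDerivAt.comp_hasDerivAt t h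
      have him : HasDerivAt (fun s => (F (s, x)).im) ((fderiv ℝ F (t, x) (1,0)).im) t :=
        Complex.imCLM.hasFDerivAt.comp_hasDerivAt t h
      have hsq := (((hre.mul hre).add (him.mul him)).div_const 2)
      have heq : (fun s => ((F (s,x)).re * (F (s,x)).re + (F (s,x)).im * (F (s,x)).im)/2)
          = fun s => ‖F (s, x)‖^2/2 := by
        funext s
        rw [← Complex.normSq_apply, ← Complex.sq_norm]
      simp only [Pi.mul_apply, Pi.add_apply] at hsq; rw [heq] at hsq
      refine hsq.congr_deriv ?_
      show _ = ((fderiv ℝ F (t, x) (1,0)) * conj (F (t,x))).re; rw [Complex.mul_re, Complex.conj_re, Complex.conj_im]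
      ring
    rw [intervalIntegral.integral_eq_sub_of_hasDerivAt key]
    · exact ((cont_BD hF hF.continuous (1,0)).comp
        (continuous_id.prodMk continuous_const)).intervalIntegrable 0 T
  rw [hFTC]; ring

lemma ibp_space (hT : 0 < T) (hK : IsCompact K) {F G : ℝ × (Fin n → ℝ) → ℂ}
    (hF : ContDiff ℝ 1 F) (hG : ContDiff ℝ 1 G)
    (hvF : EqOn F 0 (Ioo (0:ℝ) T ×ˢ Kᶜ)) (hvG : EqOn G 0 (Ioo (0:ℝ) T ×ˢ Kᶜ))
    (v : Fin n → ℝ) :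
    ∫ X in Ioo (0:ℝ) T ×ˢ (univ : Set (Fin n → ℝ)), Bre (fderiv ℝ F X (0, v)) (G X)
      = - ∫ X in Ioo (0:ℝ) T ×ˢ (univ : Set (Fin n → ℝ)), Bre (F X) (fderiv ℝ G X (0, v)) := by
  have hU : IsOpen (Ioo (0:ℝ) T ×ˢ Kᶜ) := (isOpen_Ioo).prod hK.isClosed.isOpen_compl
  have hvF' := eqOn_fderiv_zero hU hvF (0, v)
  have hvG' := eqOn_fderiv_zero hU hvG (0, v)
  have hint1 : IntegrableOn (fun X => Bre (fderiv ℝ F X (0,v)) (G X))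
      (Ioo (0:ℝ) T ×ˢ (univ : Set (Fin n → ℝ))) := by
    apply integrableOn_strip hK (cont_BD hF hG.continuous _)
    intro X hX; simp [show fderiv ℝ F X (0,v) = 0 from hvF' hX]
  have hint2 : IntegrableOn (fun X => Bre (F X) (fderiv ℝ G X (0,v)))
      (Ioo (0:ℝ) T ×ˢ (univ : Set (Fin n → ℝ))) := by
    have hc : Continuous (fun X => Bre (F X) (fderiv ℝ G X (0,v))) := by
      have h1 : Continuous (fun X => fderiv ℝ G X (0,v)) :=
        (hG.continuous_fderiv one_ne_zero).clm_apply continuous_const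
      exact (Bre.continuous₂).comp (hF.continuous.prodMk h1)
    apply integrableOn_strip hK hc
    intro X hX; simp [show fderiv ℝ G X (0,v) = 0 from hvG' hX]
  rw [fub1 hint1, fub1 hint2, ← integral_neg]
  apply setIntegral_congr_fun measurableSet_Ioo
  intro t ht
  show ∫ x, Bre (fderiv ℝ F (t, x) (0,v)) (G (t, x)) = - ∫ x, Bre (F (t, x)) (fderiv ℝ G (t, x) (0,v))
  -- slice functions
  have hFd : ∀ x, DifferentiableAt ℝ F (t, x) := fun x => (hF.differentiable one_ne_zero) (t, x)
  have hGd : ∀ x, DifferentiableAt ℝ G (t, x) := fun x => (hG.differentiable one_ne_zero) (t, x)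
  have hsliceF : Differentiable ℝ (fun y => F (t, y)) :=
    fun x => (hasFDerivAt_xslice (hFd x)).differentiableAt
  have hsliceG : Differentiable ℝ (fun y => G (t, y)) :=
    fun x => (hasFDerivAt_xslice (hGd x)).differentiableAt
  have hdF : ∀ x, fderiv ℝ (fun y => F (t, y)) x v = fderiv ℝ F (t, x) (0, v) :=
    fun x => fderiv_xslice (hFd x) v
  have hdG : ∀ x, fderiv ℝ (fun y => G (t, y)) x v = fderiv ℝ G (t, x) (0, v) :=
    fun x => fderiv_xslice (hGd x) v
  have hvan : ∀ (H : ℝ × (Fin n → ℝ) → ℂ), EqOn H 0 (Ioo (0:ℝ) T ×ˢ Kᶜ) →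
      ∀ x ∉ K, H (t, x) = 0 := by
    intro H hH x hx
    exact hH (Set.mk_mem_prod ht hx)
  have hsupp : ∀ (ψ : (Fin n → ℝ) → ℝ), Continuous ψ → (∀ x ∉ K, ψ x = 0) → Integrable ψ := by
    intro ψ hc h0
    exact hc.integrable_of_hasCompactSupport (HasCompactSupport.intro hK h0)
  have key := integral_bilinear_fderiv_right_eq_neg_left_of_integrable (μ := volume)
    (B := Bre) (f := fun y => F (t, y)) (g := fun y => G (t, y)) (v := v)
    (by -- Integrable fun x => Bre (fderiv slice F x v) (G (t,x))
      apply hsupp _ ?_ ?_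
      · have h1 : Continuous fun x => fderiv ℝ (fun y => F (t,y)) x v := by
          have : (fun x => fderiv ℝ (fun y => F (t,y)) x v) = fun x => fderiv ℝ F (t,x) (0,v) := funext hdF
          rw [this]
          exact (((hF.continuous_fderiv one_ne_zero).clm_apply continuous_const).comp
            (continuous_const.prodMk continuous_id))
        exact Bre.continuous₂.comp (h1.prodMk (hG.continuous.comp (continuous_const.prodMk continuous_id)))
      · intro x hx
        rw [hdF x]
        simp [show fderiv ℝ F (t,x) (0,v) = 0 from hvF' (Set.mk_mem_prod ht hx),
          hvan G hvG x hx]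
    )
    (by
      apply hsupp _ ?_ ?_
      · have h1 : Continuous fun x => fderiv ℝ (fun y => G (t,y)) x v := by
          have : (fun x => fderiv ℝ (fun y => G (t,y)) x v) = fun x => fderiv ℝ G (t,x) (0,v) := funext hdG
          rw [this]
          exact (((hG.continuous_fderiv one_ne_zero).clm_apply continuous_const).comp
            (continuous_const.prodMk continuous_id))
        exact Bre.continuous₂.comp ((hF.continuous.comp (continuous_const.prodMk continuous_id)).prodMk h1)
      · intro x hx
        rw [hdG x]
        simp [show fderiv ℝ G (t,x) (0,v) = 0 from hvG' (Set.mk_mem_prod ht hx),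
          hvan F hvF x hx]
    )
    (by
      apply hsupp _ ?_ ?_
      · exact Bre.continuous₂.comp ((hF.continuous.comp (continuous_const.prodMk continuous_id)).prodMk
          (hG.continuous.comp (continuous_const.prodMk continuous_id)))
      · intro x hx
        simp [hvan F hvF x hx]
    )
    (fun x _ => hsliceF x) (fun x _ => hsliceG x)
  -- key : ∫ x, Bre (F (t,x)) (fderiv slice G x v) = - ∫ x, Bre (fderiv slice F x v) (G (t,x))
  simp only [hdF, hdG] at key
  rw [eq_neg_iff_add_eq_zero] at key ⊢
  linarith [key]

lemma ibp_space_self (hT : 0 < T) (hK : IsCompact K) {F : ℝ × (Fin n → ℝ) → ℂ}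
    (hF : ContDiff ℝ 1 F) (hvF : EqOn F 0 (Ioo (0:ℝ) T ×ˢ Kᶜ)) (v : Fin n → ℝ) :
    ∫ X in Ioo (0:ℝ) T ×ˢ (univ : Set (Fin n → ℝ)), Bre (F X) (fderiv ℝ F X (0, v)) = 0 := by
  have h := ibp_space hT hK hF hF hvF hvF v
  have h2 : ∫ X in Ioo (0:ℝ) T ×ˢ (univ : Set (Fin n → ℝ)), Bre (fderiv ℝ F X (0, v)) (F X)
      = ∫ X in Ioo (0:ℝ) T ×ˢ (univ : Set (Fin n → ℝ)), Bre (F X) (fderiv ℝ F X (0, v)) := by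
    congr 1; funext X; exact Bre_symm _ _
  rw [h2] at h
  linarith

end ibp

section poincare
variable {T : ℝ} {K : Set (Fin n → ℝ)}

/-- 1-D Cauchy-Schwarz on Ioc 0 t -/
lemma cs_1d {t : ℝ} (ht : 0 ≤ t) {f : ℝ → ℝ} (hf : Continuous f) (hf0 : ∀ s, 0 ≤ f s) :
    (∫ s in Ioc (0:ℝ) t, f s)^2 ≤ t * ∫ s in Ioc (0:ℝ) t, (f s)^2 := by
  set μ := volume.restrict (Ioc (0:ℝ) t) with hμ
  haveI : Fact ((volume : Measure ℝ) (Ioc (0:ℝ) t) < ⊤) := Fact.mk measure_Ioc_lt_top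
  haveI : IsFiniteMeasure μ := by
    rw [hμ]; infer_instance
  have hconj : Real.HolderConjugate 2 2 := Real.HolderConjugate.two_two
  have hmem : MemLp f (ENNReal.ofReal 2) μ := by
    rcases (isCompact_Icc (a := (0:ℝ)) (b := t)).exists_bound_of_continuousOn
      hf.continuousOn with ⟨C, hC⟩
    apply MemLp.of_bound (hf.aestronglyMeasurable) C
    rw [hμ, ae_restrict_iff' measurableSet_Ioc]
    exact Filter.Eventually.of_forall (fun s hs => hC s ⟨le_of_lt hs.1, hs.2⟩)
  have hmem1 : MemLp (fun _ : ℝ => (1:ℝ)) (ENNReal.ofReal 2) μ := memLp_const 1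
  have key := integral_mul_le_Lp_mul_Lq_of_nonneg (μ := μ) hconj
    (Filter.Eventually.of_forall hf0) (Filter.Eventually.of_forall (fun _ => zero_le_one))
    hmem hmem1
  have hrw : ∀ s, f s ^ (2:ℝ) = f s ^ (2:ℕ) := fun s => Real.rpow_two (f s) ▸ rfl
  simp only [mul_one, Real.one_rpow, hrw] at key
  have h1 : ∫ _ in Ioc (0:ℝ) t, (1:ℝ) = t := by
    simp [Real.volume_Ioc, ht]
  rw [hμ, h1] at key
  have hB : 0 ≤ ∫ s in Ioc (0:ℝ) t, (f s)^(2:ℕ) :=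
    integral_nonneg (fun s => by positivity)
  have hA : 0 ≤ ∫ s in Ioc (0:ℝ) t, f s := integral_nonneg hf0
  show (∫ s in Ioc (0:ℝ) t, f s)^2 ≤ t * ∫ s in Ioc (0:ℝ) t, (f s)^(2:ℕ)
  calc (∫ s in Ioc (0:ℝ) t, f s)^2
      ≤ ((∫ s in Ioc (0:ℝ) t, (f s)^(2:ℕ)) ^ (1/(2:ℝ)) * t ^ (1/(2:ℝ)))^2 := by
        apply pow_le_pow_left₀ hA key
      _ = (∫ s in Ioc (0:ℝ) t, (f s)^(2:ℕ)) * t := by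
        rw [mul_pow, ← Real.rpow_natCast (_ ^ (1/(2:ℝ))) 2, ← Real.rpow_natCast (t ^ (1/(2:ℝ))) 2,
          ← Real.rpow_mul hB, ← Real.rpow_mul ht]
        norm_num
      _ = t * ∫ s in Ioc (0:ℝ) t, (f s)^(2:ℕ) := mul_comm _ _

lemma poincare_pointwise (hT : 0 < T) {w : ℝ × (Fin n → ℝ) → ℂ} (hw : ContDiff ℝ 2 w)
    (ω : Fin n → ℝ) (h0 : ∀ x, w (0, x) = 0) {t : ℝ} (ht : t ∈ Icc (0:ℝ) T)
    (x0 : Fin n → ℝ) :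
    ‖w (t, x0 + t • ω)‖^2 ≤ T * ∫ s in Ioo (0:ℝ) T, ‖Aop w (1, ω) (s, x0 + s • ω)‖^2 := by
  have hwd : Differentiable ℝ w := hw.differentiable (by norm_num)
  have hAc : Continuous (fun s : ℝ => Aop w (1, ω) (s, x0 + s • ω)) := by
    have := (Aop_contDiff hw ((1:ℝ), ω)).continuous
    exact this.comp (continuous_id.prodMk (continuous_const.add (continuous_id.smul continuous_const)))
  have hg : ∀ s : ℝ, HasDerivAt (fun r => w (r, x0 + r • ω)) (Aop w (1, ω) (s, x0 + s • ω)) s := by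
    intro s
    have hγ : HasDerivAt (fun r : ℝ => (r, x0 + r • ω)) ((1:ℝ), ω) s := by
      have h2 : HasDerivAt (fun r : ℝ => x0 + r • ω) ω s := by
        have := ((hasDerivAt_id s).smul_const ω).const_add x0
        simpa using this
      exact (hasDerivAt_id s).prodMk h2
    exact (hwd (s, x0 + s • ω)).hasFDerivAt.comp_hasDerivAt s hγ
  have hFTC : w (t, x0 + t • ω) = ∫ s in (0:ℝ)..t, Aop w (1, ω) (s, x0 + s • ω) := by
    rw [intervalIntegral.integral_eq_sub_of_hasDerivAt (fun s _ => hg s)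
      (hAc.intervalIntegrable 0 t)]
    simp [h0]
  have hnorm : ‖w (t, x0 + t • ω)‖ ≤ ∫ s in Ioc (0:ℝ) t, ‖Aop w (1, ω) (s, x0 + s • ω)‖ := by
    rw [hFTC]
    refine le_trans (intervalIntegral.norm_integral_le_integral_norm ht.1) ?_
    rw [intervalIntegral.integral_of_le ht.1]
  have hCS := cs_1d (t := t) ht.1 (f := fun s => ‖Aop w (1, ω) (s, x0 + s • ω)‖)
    (hAc.norm) (fun s => norm_nonneg _)
  have hintT : IntegrableOn (fun s => ‖Aop w (1, ω) (s, x0 + s • ω)‖^2) (Ioc 0 T) := by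
    apply Continuous.integrableOn_Ioc
    exact (hAc.norm).pow 2
  have hmono : ∫ s in Ioc (0:ℝ) t, ‖Aop w (1, ω) (s, x0 + s • ω)‖^2
      ≤ ∫ s in Ioc (0:ℝ) T, ‖Aop w (1, ω) (s, x0 + s • ω)‖^2 := by
    apply setIntegral_mono_set hintT
    · exact Filter.Eventually.of_forall (fun s => sq_nonneg _)
    · exact HasSubset.Subset.eventuallyLE (Ioc_subset_Ioc_right ht.2)
  calc ‖w (t, x0 + t • ω)‖^2
      ≤ (∫ s in Ioc (0:ℝ) t, ‖Aop w (1, ω) (s, x0 + s • ω)‖)^2 := by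
        apply pow_le_pow_left₀ (norm_nonneg _) hnorm
      _ ≤ t * ∫ s in Ioc (0:ℝ) t, ‖Aop w (1, ω) (s, x0 + s • ω)‖^2 := hCS
      _ ≤ T * ∫ s in Ioc (0:ℝ) T, ‖Aop w (1, ω) (s, x0 + s • ω)‖^2 := by
        apply mul_le_mul ht.2 hmono (integral_nonneg (fun s => sq_nonneg _)) hT.le
      _ = T * ∫ s in Ioo (0:ℝ) T, ‖Aop w (1, ω) (s, x0 + s • ω)‖^2 := by
        rw [integral_Ioc_eq_integral_Ioo]

lemma poincare (hT : 0 < T) (hK : IsCompact K) {w : ℝ × (Fin n → ℝ) → ℂ}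
    (hw : ContDiff ℝ 2 w) (ω : Fin n → ℝ)
    (hvw : EqOn w 0 (Ioo (0:ℝ) T ×ˢ Kᶜ)) (h0 : ∀ x, w (0, x) = 0) :
    ∫ X in Ioo (0:ℝ) T ×ˢ (univ : Set (Fin n → ℝ)), ‖w X‖^2
      ≤ T^2 * ∫ X in Ioo (0:ℝ) T ×ˢ (univ : Set (Fin n → ℝ)), ‖Aop w (1, ω) X‖^2 := by
  have hU : IsOpen (Ioo (0:ℝ) T ×ˢ Kᶜ) := (isOpen_Ioo).prod hK.isClosed.isOpen_compl
  have hvA : EqOn (Aop w (1, ω)) 0 (Ioo (0:ℝ) T ×ˢ Kᶜ) :=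
    fun X hX => eqOn_fderiv_zero hU hvw (1, ω) hX
  have hAcont : Continuous (Aop w (1, ω)) := (Aop_contDiff hw _).continuous
  set K' := (fun p : ℝ × (Fin n → ℝ) => p.2 - p.1 • ω) '' (Icc (0:ℝ) T ×ˢ K) with hK'def
  have hK' : IsCompact K' := (isCompact_Icc.prod hK).image
    (continuous_snd.sub (continuous_fst.smul continuous_const))
  set h2 : ℝ × (Fin n → ℝ) → ℝ := fun X => ‖Aop w (1, ω) (X.1, X.2 + X.1 • ω)‖^2 with hh2def
  have hh2c : Continuous h2 := ((hAcont.comp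
    (continuous_fst.prodMk (continuous_snd.add (continuous_fst.smul continuous_const)))).norm).pow 2
  have hh2van : ∀ X ∈ Ioo (0:ℝ) T ×ˢ K'ᶜ, h2 X = 0 := by
    rintro ⟨s, x0⟩ ⟨hs, hx0⟩
    have hxK : x0 + s • ω ∉ K := by
      intro hmem
      exact hx0 ⟨(s, x0 + s • ω), ⟨⟨le_of_lt hs.1, le_of_lt hs.2⟩, hmem⟩, by simp⟩
    have : Aop w (1, ω) (s, x0 + s • ω) = 0 := hvA (Set.mk_mem_prod hs hxK)
    simp [hh2def, this]
  have hint_h2 : IntegrableOn h2 (Ioo (0:ℝ) T ×ˢ (univ : Set (Fin n → ℝ))) :=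
    integrableOn_strip hK' hh2c hh2van
  set R := fun x0 : Fin n → ℝ => ∫ s in Ioo (0:ℝ) T, h2 (s, x0) with hRdef
  have hRint : Integrable R := by
    have h := hint_h2
    rw [IntegrableOn, Measure.volume_eq_prod, ← Measure.prod_restrict, Measure.restrict_univ] at h
    exact h.integral_prod_right
  have hJL : IntegrableOn (fun X => ‖Aop w (1, ω) X‖^2)
      (Ioo (0:ℝ) T ×ˢ (univ : Set (Fin n → ℝ))) := by
    apply integrableOn_strip hK (hAcont.norm.pow 2)
    intro X hX; simp [hvA hX]
  have hRtot : ∫ x0, R x0 = ∫ X in Ioo (0:ℝ) T ×ˢ (univ : Set (Fin n → ℝ)), ‖Aop w (1, ω) X‖^2 := by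
    rw [hRdef]
    rw [show (fun x0 : Fin n → ℝ => ∫ s in Ioo (0:ℝ) T, h2 (s, x0)) = fun x0 => ∫ s in Ioo (0:ℝ) T, h2 (s, x0) from rfl]
    rw [← fub2 hint_h2, fub1 hint_h2, fub1 hJL]
    apply setIntegral_congr_fun measurableSet_Ioo
    intro s _
    exact integral_add_right_eq_self (fun y => ‖Aop w (1, ω) (s, y)‖^2) (s • ω)
  have hJw : IntegrableOn (fun X => ‖w X‖^2) (Ioo (0:ℝ) T ×ˢ (univ : Set (Fin n → ℝ))) := by
    apply integrableOn_strip hK (hw.continuous.norm.pow 2)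
    intro X hX; simp [hvw hX]
  rw [fub1 hJw, fub1 hJL]
  have hAint : IntegrableOn (fun t => ∫ x, ‖w (t, x)‖^2) (Ioo (0:ℝ) T) := by
    have h := hJw
    rw [IntegrableOn, Measure.volume_eq_prod, ← Measure.prod_restrict, Measure.restrict_univ] at h
    exact h.integral_prod_left
  have hconst_int : IntegrableOn (fun _ : ℝ => T * ∫ x0, R x0) (Ioo (0:ℝ) T) := by
    exact integrableOn_const measure_Ioo_lt_top.ne
  calc ∫ t in Ioo (0:ℝ) T, ∫ x, ‖w (t, x)‖^2
      ≤ ∫ _t in Ioo (0:ℝ) T, (T * ∫ x0, R x0) := by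
        apply setIntegral_mono_on hAint hconst_int measurableSet_Ioo
        intro t ht
        have e1 : ∫ x, ‖w (t, x)‖^2 = ∫ x0, ‖w (t, x0 + t • ω)‖^2 :=
          (integral_add_right_eq_self (fun y => ‖w (t, y)‖^2) (t • ω)).symm
        rw [e1]
        have hbd : ∀ x0, ‖w (t, x0 + t • ω)‖^2 ≤ T * R x0 :=
          fun x0 => poincare_pointwise hT hw ω h0 ⟨le_of_lt ht.1, le_of_lt ht.2⟩ x0
        have h3 : ∫ x0, ‖w (t, x0 + t • ω)‖^2 ≤ ∫ x0, T * R x0 := by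
          apply integral_mono_of_nonneg
          · exact Filter.Eventually.of_forall (fun x0 => sq_nonneg _)
          · exact hRint.const_mul T
          · exact Filter.Eventually.of_forall hbd
        rw [MeasureTheory.integral_const_mul] at h3
        exact h3
      _ = T * (T * ∫ x0, R x0) := by
        rw [setIntegral_const]
        simp [Real.volume_Ioo, ENNReal.toReal_ofReal hT.le, smul_eq_mul, hT.le]
      _ = T^2 * ∫ t in Ioo (0:ℝ) T, ∫ x, ‖Aop w (1, ω) (t, x)‖^2 := by
        rw [hRtot, fub1 hJL]
        ring

section cross
variable {T : ℝ} {K : Set (Fin n → ℝ)}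

lemma cross_nonneg (hT : 0 < T) (hK : IsCompact K) {w : ℝ × (Fin n → ℝ) → ℂ}
    (hw : ContDiff ℝ 2 w) (ω : Fin n → ℝ)
    (hvw : EqOn w 0 (Ioo (0:ℝ) T ×ˢ Kᶜ))
    (h00 : ∀ x, w (0, x) = 0) (hp0 : ∀ x, Aop w (1, 0) (0, x) = 0)
    (hTT : ∀ x, w (T, x) = 0) :
    0 ≤ ∫ X in Ioo (0:ℝ) T ×ˢ (univ : Set (Fin n → ℝ)),
      Bre (waveOp w X) (Aop w (1, ω) X) := by
  have hU : IsOpen (Ioo (0:ℝ) T ×ˢ Kᶜ) := (isOpen_Ioo).prod hK.isClosed.isOpen_compl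
  have hvanA : ∀ u, EqOn (Aop w u) 0 (Ioo (0:ℝ) T ×ˢ Kᶜ) :=
    fun u X hX => eqOn_fderiv_zero hU hvw u hX
  -- boundary values of spatial derivatives
  have bT : ∀ (x : Fin n → ℝ) (v : Fin n → ℝ), Aop w (0, v) (T, x) = 0 := by
    intro x v
    have h1 : Aop w (0, v) (T, x) = fderiv ℝ (fun y => w (T, y)) x v :=
      (fderiv_xslice ((hw.differentiable (by norm_num)) (T, x)) v).symm
    have h2 : (fun y : Fin n → ℝ => w (T, y)) = fun _ => 0 := funext hTT
    rw [h1, h2, fderiv_fun_const]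
    rfl
  have b0 : ∀ (x : Fin n → ℝ) (v : Fin n → ℝ), Aop w (0, v) (0, x) = 0 := by
    intro x v
    have h1 : Aop w (0, v) (0, x) = fderiv ℝ (fun y => w (0, y)) x v :=
      (fderiv_xslice ((hw.differentiable (by norm_num)) (0, x)) v).symm
    have h2 : (fun y : Fin n → ℝ => w (0, y)) = fun _ => 0 := funext h00
    rw [h1, h2, fderiv_fun_const]
    rfl
  have b0m : ∀ x : Fin n → ℝ, Aop w (1, ω) (0, x) = 0 := by
    intro x
    have : ((1:ℝ), ω) = ((1:ℝ), (0 : Fin n → ℝ)) + ((0:ℝ), ω) := by simp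
    rw [this, Aop_add, hp0 x, b0 x ω, add_zero]
  -- integrability helpers
  have int1 : ∀ u v u' : ℝ × (Fin n → ℝ),
      IntegrableOn (fun X => Bre (fderiv ℝ (Aop w u) X v) (Aop w u' X))
        (Ioo (0:ℝ) T ×ˢ (univ : Set (Fin n → ℝ))) := by
    intro u v u'
    apply integrableOn_strip hK
    · exact Bre.continuous₂.comp ((fderiv_Aop_continuous hw u v).prodMk (Aop_contDiff hw u').continuous)
    · intro X hX
      simp [show fderiv ℝ (Aop w u) X v = 0 from eqOn_fderiv_zero hU (hvanA u) v hX]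
  have int2 : ∀ u' u v : ℝ × (Fin n → ℝ),
      IntegrableOn (fun X => Bre (Aop w u' X) (fderiv ℝ (Aop w u) X v))
        (Ioo (0:ℝ) T ×ˢ (univ : Set (Fin n → ℝ))) := by
    intro u' u v
    apply integrableOn_strip hK
    · exact Bre.continuous₂.comp ((Aop_contDiff hw u').continuous.prodMk (fderiv_Aop_continuous hw u v))
    · intro X hX
      have h0' : Aop w u' X = 0 := hvanA u' hX
      simp [h0']
  -- directional additivity of second derivative
  have hAm : (Aop w ((1:ℝ), ω)) = fun X => Aop w (1, 0) X + Aop w ((0:ℝ), ω) X := by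
    funext X
    rw [← Aop_add]
    congr 1
    simp
  have hsplit_dir : ∀ (X v : ℝ × (Fin n → ℝ)), fderiv ℝ (Aop w (1, ω)) X v
      = fderiv ℝ (Aop w (1, 0)) X v + fderiv ℝ (Aop w ((0:ℝ), ω)) X v := by
    intro X v
    rw [hAm, fderiv_fun_add ((Aop_differentiable hw _ X)) ((Aop_differentiable hw _ X))]
    rfl
  -- expansion of the cross integral
  have hwave : ∀ X, waveOp w X
      = (fderiv ℝ (Aop w (1, ω)) X (1, 0) - fderiv ℝ (Aop w ((0:ℝ), ω)) X (1, 0))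
        - ∑ i, fderiv ℝ (Aop w ((0:ℝ), Pi.single i 1)) X ((0:ℝ), Pi.single i 1) := by
    intro X
    rw [waveOp, ptt_eq hw, lapx_eq hw, hsplit_dir X (1, 0)]
    ring
  have hsum_int : IntegrableOn (fun X => ∑ i, Bre
      (fderiv ℝ (Aop w ((0:ℝ), Pi.single i 1)) X ((0:ℝ), Pi.single i 1)) (Aop w (1, ω) X))
      (Ioo (0:ℝ) T ×ˢ (univ : Set (Fin n → ℝ))) :=
    MeasureTheory.integrable_finset_sum _ (fun i _ => int1 _ _ _)
  have hexp : ∫ X in Ioo (0:ℝ) T ×ˢ (univ : Set (Fin n → ℝ)), Bre (waveOp w X) (Aop w (1, ω) X)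
      = ((∫ X in Ioo (0:ℝ) T ×ˢ (univ : Set (Fin n → ℝ)),
            Bre (fderiv ℝ (Aop w (1, ω)) X (1, 0)) (Aop w (1, ω) X))
          - ∫ X in Ioo (0:ℝ) T ×ˢ (univ : Set (Fin n → ℝ)),
            Bre (fderiv ℝ (Aop w ((0:ℝ), ω)) X (1, 0)) (Aop w (1, ω) X))
        - ∑ i, ∫ X in Ioo (0:ℝ) T ×ˢ (univ : Set (Fin n → ℝ)),
            Bre (fderiv ℝ (Aop w ((0:ℝ), Pi.single i 1)) X ((0:ℝ), Pi.single i 1)) (Aop w (1, ω) X) := by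
    have e1 : (fun X => Bre (waveOp w X) (Aop w (1, ω) X))
        = fun X => (Bre (fderiv ℝ (Aop w (1, ω)) X (1, 0)) (Aop w (1, ω) X)
            - Bre (fderiv ℝ (Aop w ((0:ℝ), ω)) X (1, 0)) (Aop w (1, ω) X))
          - ∑ i, Bre (fderiv ℝ (Aop w ((0:ℝ), Pi.single i 1)) X ((0:ℝ), Pi.single i 1)) (Aop w (1, ω) X) := by
      funext X
      rw [hwave X]
      simp [map_sub, map_sum, ContinuousLinearMap.sub_apply, ContinuousLinearMap.coe_sum',
        Finset.sum_apply]
    have h12 : Integrable (fun X => Bre (fderiv ℝ (Aop w (1, ω)) X (1, 0)) (Aop w (1, ω) X)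
        - Bre (fderiv ℝ (Aop w ((0:ℝ), ω)) X (1, 0)) (Aop w (1, ω) X))
        (volume.restrict (Ioo (0:ℝ) T ×ˢ (univ : Set (Fin n → ℝ)))) :=
      ((int1 ((1:ℝ), ω) ((1:ℝ), (0:Fin n → ℝ)) ((1:ℝ), ω))).sub
        (int1 ((0:ℝ), ω) ((1:ℝ), (0:Fin n → ℝ)) ((1:ℝ), ω))
    rw [e1]
    rw [integral_sub h12 hsum_int]
    rw [integral_sub (int1 ((1:ℝ), ω) ((1:ℝ), (0:Fin n → ℝ)) ((1:ℝ), ω))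
        (int1 ((0:ℝ), ω) ((1:ℝ), (0:Fin n → ℝ)) ((1:ℝ), ω))]
    rw [integral_finset_sum _ (fun i _ => int1 _ _ _)]
  rw [hexp]
  -- Term 1 : nonneg by FTC in time
  have hT1 : 0 ≤ ∫ X in Ioo (0:ℝ) T ×ˢ (univ : Set (Fin n → ℝ)),
      Bre (fderiv ℝ (Aop w (1, ω)) X (1, 0)) (Aop w (1, ω) X) := by
    rw [ftc_time hT hK (Aop_contDiff hw _) (hvanA _)]
    apply integral_nonneg
    intro x
    simp only [b0m x, norm_zero, zero_pow, sub_zero, ne_eq, OfNat.ofNat_ne_zero,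
      not_false_eq_true]
    positivity
  -- generic: FTC-zero for A u with vanishing boundary values
  have hftc0 : ∀ u : ℝ × (Fin n → ℝ), (∀ x, Aop w u (T, x) = 0) → (∀ x, Aop w u (0, x) = 0) →
      ∫ X in Ioo (0:ℝ) T ×ˢ (univ : Set (Fin n → ℝ)),
        Bre (fderiv ℝ (Aop w u) X (1, 0)) (Aop w u X) = 0 := by
    intro u hbT hb0
    rw [ftc_time hT hK (Aop_contDiff hw _) (hvanA _)]
    apply integral_eq_zero_of_ae
    apply Filter.Eventually.of_forall
    intro x
    simp [hbT x, hb0 x]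
  -- Term 2 = 0
  have hT2 : ∫ X in Ioo (0:ℝ) T ×ˢ (univ : Set (Fin n → ℝ)),
      Bre (fderiv ℝ (Aop w ((0:ℝ), ω)) X (1, 0)) (Aop w (1, ω) X) = 0 := by
    have e2 : (fun X => Bre (fderiv ℝ (Aop w ((0:ℝ), ω)) X (1, 0)) (Aop w (1, ω) X))
        = fun X => Bre (fderiv ℝ (Aop w (1, 0)) X ((0:ℝ), ω)) (Aop w (1, ω) X) := by
      funext X; rw [Aop_symm hw]
    rw [e2, ibp_space hT hK (Aop_contDiff hw _) (Aop_contDiff hw _) (hvanA _) (hvanA _) ω]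
    have e3 : (fun X => Bre (Aop w (1, 0) X) (fderiv ℝ (Aop w (1, ω)) X ((0:ℝ), ω)))
        = fun X => Bre (Aop w (1, 0) X) (fderiv ℝ (Aop w (1, 0)) X ((0:ℝ), ω))
          + Bre (Aop w (1, 0) X) (fderiv ℝ (Aop w ((0:ℝ), ω)) X ((0:ℝ), ω)) := by
      funext X; rw [hsplit_dir X ((0:ℝ), ω), map_add]
    rw [e3, integral_add (int2 _ _ _) (int2 _ _ _)]
    · rw [ibp_space_self hT hK (Aop_contDiff hw _) (hvanA _) ω]
      have e4 : (fun X => Bre (Aop w (1, 0) X) (fderiv ℝ (Aop w ((0:ℝ), ω)) X ((0:ℝ), ω)))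
          = fun X => Bre (fderiv ℝ (Aop w ((0:ℝ), ω)) X ((0:ℝ), ω)) (Aop w (1, 0) X) := by
        funext X; exact Bre_symm _ _
      rw [e4, ibp_space hT hK (Aop_contDiff hw _) (Aop_contDiff hw _) (hvanA _) (hvanA _) ω]
      have e5 : (fun X => Bre (Aop w ((0:ℝ), ω) X) (fderiv ℝ (Aop w (1, 0)) X ((0:ℝ), ω)))
          = fun X => Bre (fderiv ℝ (Aop w ((0:ℝ), ω)) X (1, 0)) (Aop w ((0:ℝ), ω) X) := by
        funext X; rw [Aop_symm hw]; exact Bre_symm _ _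
      rw [e5, hftc0 ((0:ℝ), ω) (fun x => bT x ω) (fun x => b0 x ω)]
      simp
  -- Term 3 = 0 for each i
  have hT3 : ∀ i, ∫ X in Ioo (0:ℝ) T ×ˢ (univ : Set (Fin n → ℝ)),
      Bre (fderiv ℝ (Aop w ((0:ℝ), Pi.single i 1)) X ((0:ℝ), Pi.single i 1)) (Aop w (1, ω) X) = 0 := by
    intro i
    rw [ibp_space hT hK (Aop_contDiff hw _) (Aop_contDiff hw _) (hvanA _) (hvanA _) (Pi.single i 1)]
    have e3 : (fun X => Bre (Aop w ((0:ℝ), Pi.single i 1) X)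
          (fderiv ℝ (Aop w (1, ω)) X ((0:ℝ), Pi.single i 1)))
        = fun X => Bre (fderiv ℝ (Aop w ((0:ℝ), Pi.single i 1)) X (1, 0)) (Aop w ((0:ℝ), Pi.single i 1) X)
          + Bre (Aop w ((0:ℝ), Pi.single i 1) X) (fderiv ℝ (Aop w ((0:ℝ), Pi.single i 1)) X ((0:ℝ), ω)) := by
      funext X
      rw [hsplit_dir X ((0:ℝ), Pi.single i 1), map_add]
      congr 1
      · rw [Aop_symm hw]; exact Bre_symm _ _
      · rw [Aop_symm hw]
    rw [e3, integral_add (int1 _ _ _) (int2 _ _ _)]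
    rw [hftc0 ((0:ℝ), Pi.single i 1) (fun x => bT x _) (fun x => b0 x _),
      ibp_space_self hT hK (Aop_contDiff hw _) (hvanA _) ω]
    simp
  rw [hT2, Finset.sum_congr rfl (fun i _ => hT3 i)]
  simp only [Finset.sum_const_zero, sub_zero]
  linarith [hT1]

end cross

/-- pointwise expansion of the square -/
lemma norm_expand (lam : ℝ) (a b : ℂ) :
    ‖a + ((2 * lam : ℝ) : ℂ) * b‖^2
      = ‖a‖^2 + (4 * lam^2 * ‖b‖^2 + 4 * lam * Bre a b) := by
  have hn : ∀ z : ℂ, ‖z‖^2 = z.re^2 + z.im^2 := by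
    intro z
    rw [Complex.sq_norm, Complex.normSq_apply]
    ring
  simp only [hn, Bre_apply, Complex.add_re, Complex.add_im, Complex.mul_re, Complex.mul_im,
    Complex.ofReal_re, Complex.ofReal_im, Complex.conj_re, Complex.conj_im]
  ring

/-- Lower bound for the conjugated operator with weight e^{λ(t−x·ω)} acting on
w ∈ C²([0,T];C_c^∞(Ω)) with w(0,·) = ∂ₜw(0,·) = w(T,·) = 0:
∫_Q |□w + 2λ(∂ₜw + ω·∇ₓw)|² ≥ ∫_Q |□w|² + cλ²∫_Q |w|². -/
theorem carleman_lower_bound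
    (n : ℕ) (hn : 2 ≤ n) (Ω : Set (Fin n → ℝ)) (hΩo : IsOpen Ω)
    (hΩb : Bornology.IsBounded Ω) (T : ℝ) (hT : 0 < T)
    (ω : Fin n → ℝ) (hω : ∑ i, ω i ^ 2 = 1) :
    ∃ c > (0 : ℝ), ∃ lam₀ > (0 : ℝ), ∀ lam > lam₀,
      ∀ w : ℝ × (Fin n → ℝ) → ℂ,
        ContDiff ℝ 2 w →
        (∀ t : ℝ, ContDiff ℝ (⊤ : ℕ∞) (fun x => w (t, x))) →
        (∃ K : Set (Fin n → ℝ), IsCompact K ∧ K ⊆ Ω ∧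
          ∀ t ∈ Set.Icc (0 : ℝ) T, {x | w (t, x) ≠ 0} ⊆ K) →
        (∀ x : Fin n → ℝ, w (0, x) = 0) →
        (∀ x : Fin n → ℝ, pt w (0, x) = 0) →
        (∀ x : Fin n → ℝ, w (T, x) = 0) →
        (∫ X in Set.Ioo (0 : ℝ) T ×ˢ Ω, ‖waveOp w X‖ ^ 2) +
            c * lam ^ 2 * ∫ X in Set.Ioo (0 : ℝ) T ×ˢ Ω, ‖w X‖ ^ 2 ≤
          ∫ X in Set.Ioo (0 : ℝ) T ×ˢ Ω,
            ‖waveOp w X + ((2 * lam : ℝ) : ℂ) * (pt w X + dx w X ω)‖ ^ 2 := by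
  have hT2pos : (0:ℝ) < T^2 := by positivity
  refine ⟨4 / T^2, by positivity, 1, one_pos, ?_⟩
  intro lam hlam w hw _hws hsupp h0 hp0 hTT
  obtain ⟨K, hK, hKΩ, hsuppK⟩ := hsupp
  have hlam0 : (0:ℝ) < lam := lt_trans one_pos hlam
  set S : Set (ℝ × (Fin n → ℝ)) := Ioo (0:ℝ) T ×ˢ (univ : Set (Fin n → ℝ)) with hSdef
  have hU : IsOpen (Ioo (0:ℝ) T ×ˢ Kᶜ) := isOpen_Ioo.prod hK.isClosed.isOpen_compl
  have hvw : EqOn w 0 (Ioo (0:ℝ) T ×ˢ Kᶜ) := by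
    rintro ⟨t, x⟩ ⟨ht, hx⟩
    by_contra hne
    exact hx (hsuppK t ⟨le_of_lt ht.1, le_of_lt ht.2⟩ hne)
  have hvanA : ∀ u, EqOn (Aop w u) 0 (Ioo (0:ℝ) T ×ˢ Kᶜ) :=
    fun u X hX => eqOn_fderiv_zero hU hvw u hX
  have hvanA2 : ∀ u v, EqOn (fun X => fderiv ℝ (Aop w u) X v) 0 (Ioo (0:ℝ) T ×ˢ Kᶜ) :=
    fun u v => eqOn_fderiv_zero hU (hvanA u) v
  have hwaveC : Continuous (fun X => waveOp w X) := by
    have e : (fun X => waveOp w X) = fun X => fderiv ℝ (Aop w (1, 0)) X (1, 0)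
        - ∑ i, fderiv ℝ (Aop w ((0:ℝ), Pi.single i 1)) X ((0:ℝ), Pi.single i 1) :=
      funext fun X => by rw [waveOp, ptt_eq hw, lapx_eq hw]
    rw [e]
    exact (fderiv_Aop_continuous hw _ _).sub
      (continuous_finset_sum _ fun i _ => fderiv_Aop_continuous hw _ _)
  have hwaveV : ∀ X ∈ Ioo (0:ℝ) T ×ˢ Kᶜ, waveOp w X = 0 := by
    intro X hX
    rw [waveOp, ptt_eq hw, lapx_eq hw]
    have h1 : fderiv ℝ (Aop w (1, 0)) X (1, 0) = 0 := hvanA2 _ _ hX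
    have h2 : ∀ i, fderiv ℝ (Aop w ((0:ℝ), Pi.single i 1)) X ((0:ℝ), Pi.single i 1) = 0 :=
      fun i => hvanA2 _ _ hX
    simp [h1, h2]
  have hLa : ∀ X, pt w X + dx w X ω = Aop w (1, ω) X := by
    intro X
    rw [pt_eq hw, dx_eq hw, ← Aop_add]
    congr 1
    simp
  have hAmC : Continuous (Aop w (1, ω)) := (Aop_contDiff hw _).continuous
  have hAmV : ∀ X ∈ Ioo (0:ℝ) T ×ˢ Kᶜ, Aop w (1, ω) X = 0 := fun X hX => hvanA _ hX
  -- integrability on the strip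
  have intW : IntegrableOn (fun X => ‖waveOp w X‖^2) S :=
    integrableOn_strip hK (hwaveC.norm.pow 2) (fun X hX => by simp [hwaveV X hX])
  have intw2 : IntegrableOn (fun X => ‖w X‖^2) S :=
    integrableOn_strip hK (hw.continuous.norm.pow 2) (fun X hX => by
      have : w X = 0 := hvw hX
      simp [this])
  have intAm2 : IntegrableOn (fun X => ‖Aop w (1, ω) X‖^2) S :=
    integrableOn_strip hK (hAmC.norm.pow 2) (fun X hX => by simp [hAmV X hX])
  have intCross : IntegrableOn (fun X => Bre (waveOp w X) (Aop w (1, ω) X)) S :=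
    integrableOn_strip hK (Bre.continuous₂.comp (hwaveC.prodMk hAmC))
      (fun X hX => by simp [hwaveV X hX])
  -- converting Ω-integrals to univ-integrals
  have hSm : MeasurableSet S := measurableSet_Ioo.prod MeasurableSet.univ
  have hsub : Ioo (0:ℝ) T ×ˢ Ω ⊆ S := prod_mono subset_rfl (subset_univ _)
  have hdiff : ∀ X ∈ S \ (Ioo (0:ℝ) T ×ˢ Ω), X ∈ Ioo (0:ℝ) T ×ˢ Kᶜ := by
    rintro ⟨t, x⟩ ⟨⟨ht, -⟩, hns⟩
    refine ⟨ht, fun hxK => hns ⟨ht, hKΩ hxK⟩⟩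
  have conv1 : ∫ X in Ioo (0:ℝ) T ×ˢ Ω, ‖waveOp w X‖^2 = ∫ X in S, ‖waveOp w X‖^2 :=
    (setIntegral_eq_of_subset_of_forall_diff_eq_zero hSm hsub
      (fun X hX => by simp [hwaveV X (hdiff X hX)])).symm
  have conv2 : ∫ X in Ioo (0:ℝ) T ×ˢ Ω, ‖w X‖^2 = ∫ X in S, ‖w X‖^2 :=
    (setIntegral_eq_of_subset_of_forall_diff_eq_zero hSm hsub
      (fun X hX => by
        have : w X = 0 := hvw (hdiff X hX)
        simp [this])).symm
  have conv3 : ∫ X in Ioo (0:ℝ) T ×ˢ Ω, ‖waveOp w X + ((2 * lam : ℝ) : ℂ) * (pt w X + dx w X ω)‖^2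
      = ∫ X in S, ‖waveOp w X + ((2 * lam : ℝ) : ℂ) * (Aop w (1, ω) X)‖^2 := by
    simp only [hLa]
    exact (setIntegral_eq_of_subset_of_forall_diff_eq_zero hSm hsub
      (fun X hX => by simp [hwaveV X (hdiff X hX), hAmV X (hdiff X hX)])).symm
  rw [conv1, conv2, conv3]
  -- expansion of the right-hand side
  have hExp : ∫ X in S, ‖waveOp w X + ((2 * lam : ℝ) : ℂ) * (Aop w (1, ω) X)‖^2
      = (∫ X in S, ‖waveOp w X‖^2)
        + (4 * lam^2 * (∫ X in S, ‖Aop w (1, ω) X‖^2)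
          + 4 * lam * ∫ X in S, Bre (waveOp w X) (Aop w (1, ω) X)) := by
    rw [setIntegral_congr_fun hSm
      (fun X _ => norm_expand lam (waveOp w X) (Aop w (1, ω) X))]
    have intSum : Integrable (fun X => 4 * lam^2 * ‖Aop w (1, ω) X‖^2
        + 4 * lam * Bre (waveOp w X) (Aop w (1, ω) X)) (volume.restrict S) :=
      (intAm2.const_mul (4 * lam^2)).add (intCross.const_mul (4 * lam))
    rw [integral_add intW intSum]
    rw [integral_add (intAm2.const_mul (4 * lam^2)) (intCross.const_mul (4 * lam))]
    rw [MeasureTheory.integral_const_mul, MeasureTheory.integral_const_mul]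
  rw [hExp]
  have hp0' : ∀ x, Aop w (1, 0) (0, x) = 0 := fun x => by
    rw [← pt_eq hw]; exact hp0 x
  have hCr := cross_nonneg hT hK hw ω hvw h0 hp0' hTT
  have hP := poincare hT hK hw ω hvw h0
  have h1 : 4 / T^2 * lam^2 * (∫ X in S, ‖w X‖^2)
      ≤ 4 / T^2 * lam^2 * (T^2 * ∫ X in S, ‖Aop w (1, ω) X‖^2) :=
    mul_le_mul_of_nonneg_left hP (by positivity)
  have h2 : 4 / T^2 * lam^2 * (T^2 * ∫ X in S, ‖Aop w (1, ω) X‖^2)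
      = 4 * lam^2 * ∫ X in S, ‖Aop w (1, ω) X‖^2 := by
    field_simp
  have h3 : 0 ≤ 4 * lam * ∫ X in S, Bre (waveOp w X) (Aop w (1, ω) X) :=
    mul_nonneg (by positivity) hCr
  linarith
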